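/- Let x̄ ∈ {−1,+1}³, ȳ ∈ ℝ³, z̄ ∈ ℝ³ with ⟨z̄, x̄⟩ = 0, and C = Diag(ȳ) − z̄ z̄ᵀ. Then the MaxCut SDP max{Tr(CX) : diag(X) = 𝟙, X ⪰ 0, X ∈ Sym(3)} and its dual admit a strictly complementary pair of optimal solutions if and only if z̄_i = 0 for some i ∈ {1,2,3}. -/

import Mathlib

open Matrix


lemma vecMulVec_mulVec' (a b v : Fin 3 → ℝ) :
    vecMulVec a b *ᵥ v = (b ⬝ᵥ v) • a := by
  funext i
  simp only [mulVec, vecMulVec_apply, dotProduct, Pi.smul_apply, smul_eq_mul, Finset.sum_mul]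
  exact Finset.sum_congr rfl fun j _ => by ring

lemma dot_vecMulVec_self (a v : Fin 3 → ℝ) :
    v ⬝ᵥ (vecMulVec a a *ᵥ v) = (a ⬝ᵥ v) ^ 2 := by
  rw [vecMulVec_mulVec', dotProduct_smul, smul_eq_mul, dotProduct_comm]
  ring

lemma posSemidef_vecMulVec_self (a : Fin 3 → ℝ) : (vecMulVec a a).PosSemidef := by
  apply PosSemidef.of_dotProduct_mulVec_nonneg
  · ext i j
    simp [conjTranspose_apply, vecMulVec_apply, mul_comm]
  · intro x
    rw [star_trivial, dot_vecMulVec_self]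
    positivity

lemma mul_vecMulVec' (M : Matrix (Fin 3) (Fin 3) ℝ) (a b : Fin 3 → ℝ) :
    M * vecMulVec a b = vecMulVec (M *ᵥ a) b := by
  ext i j
  simp only [mul_apply, vecMulVec_apply, mulVec, dotProduct, Finset.sum_mul]
  exact Finset.sum_congr rfl fun k _ => by ring

lemma trace_C_mul (yb z : Fin 3 → ℝ) (Y : Matrix (Fin 3) (Fin 3) ℝ) :
    ((diagonal yb - vecMulVec z z) * Y).trace
      = (∑ i, yb i * Y i i) - z ⬝ᵥ (Y *ᵥ z) := by
  rw [sub_mul, trace_sub]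
  congr 1
  · simp [trace, diag, mul_apply, diagonal_apply, ite_mul]
  · simp only [trace, diag, mul_apply, vecMulVec_apply, dotProduct, mulVec, Finset.mul_sum]
    rw [Finset.sum_comm]
    exact Finset.sum_congr rfl fun j _ => Finset.sum_congr rfl fun i _ => by ring

lemma sum3 {M : Type*} [AddCommMonoid M] (a b c : Fin 3) (hab : a ≠ b) (hac : a ≠ c)
    (hbc : b ≠ c) (f : Fin 3 → M) : ∑ t, f t = f a + f b + f c := by
  have hu : (Finset.univ : Finset (Fin 3)) = {a, b, c} := by
    symm
    apply Finset.eq_univ_of_card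
    rw [Finset.card_insert_of_notMem (by simp [hab, hac]),
      Finset.card_insert_of_notMem (by simp [hbc]), Finset.card_singleton]
    rfl
  rw [hu, Finset.sum_insert (by simp [hab, hac]), Finset.sum_insert (by simp [hbc]),
    Finset.sum_singleton, add_assoc]

lemma primal_opt (yb z : Fin 3 → ℝ) (X : Matrix (Fin 3) (Fin 3) ℝ)
    (hXdiag : ∀ i, X i i = 1) (hXz : X *ᵥ z = 0)
    (Y : Matrix (Fin 3) (Fin 3) ℝ) (hY : Y.PosSemidef) (hYd : ∀ i, Y i i = 1) :
    ((diagonal yb - vecMulVec z z) * Y).trace ≤ ((diagonal yb - vecMulVec z z) * X).trace := by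
  rw [trace_C_mul, trace_C_mul, hXz]
  simp only [hXdiag, hYd, mul_one, dotProduct_zero]
  have h := hY.dotProduct_mulVec_nonneg z
  rw [star_trivial] at h
  linarith

lemma dual_opt (xb yb z : Fin 3 → ℝ) (hx2 : ∀ i, xb i * xb i = 1)
    (hz : ∑ i, z i * xb i = 0) (y' : Fin 3 → ℝ)
    (h : (diagonal y' - (diagonal yb - vecMulVec z z)).PosSemidef) :
    ∑ i, yb i ≤ ∑ i, y' i := by
  have h2 := h.dotProduct_mulVec_nonneg xb
  rw [star_trivial] at h2
  have hrw : diagonal y' - (diagonal yb - vecMulVec z z)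
      = (diagonal y' - diagonal yb) + vecMulVec z z := by abel
  rw [hrw, add_mulVec, dotProduct_add, dot_vecMulVec_self, sub_mulVec, dotProduct_sub] at h2
  have hzx : z ⬝ᵥ xb = 0 := hz
  have hdiag : ∀ w : Fin 3 → ℝ, xb ⬝ᵥ (diagonal w *ᵥ xb) = ∑ i, w i := by
    intro w
    simp only [dotProduct, mulVec_diagonal]
    exact Finset.sum_congr rfl fun t _ => by linear_combination w t * hx2 t
  rw [hzx, hdiag, hdiag] at h2
  norm_num at h2
  linarith


/-- For `n = 3` and `C = Diag(ȳ) − z̄ z̄ᵀ` with `z̄ ⊥ x̄`, `x̄ ∈ {±1}³`, strict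
complementarity holds for the MaxCut SDP and its dual iff some coordinate of
`z̄` vanishes. -/
theorem maxCut3_strict_complementarity_iff (xbar ybar zbar : Fin 3 → ℝ)
    (hx : ∀ i, xbar i = 1 ∨ xbar i = -1)
    (hz : ∑ i, zbar i * xbar i = 0)
    (C : Matrix (Fin 3) (Fin 3) ℝ)
    (hC : C = Matrix.diagonal ybar - Matrix.vecMulVec zbar zbar) :
    (∃ (X : Matrix (Fin 3) (Fin 3) ℝ) (y : Fin 3 → ℝ),
        -- X is primal optimal
        (X.PosSemidef ∧ (∀ i, X i i = 1) ∧
          ∀ Y : Matrix (Fin 3) (Fin 3) ℝ, Y.PosSemidef → (∀ i, Y i i = 1) →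
            (C * Y).trace ≤ (C * X).trace) ∧
        -- y is dual optimal
        ((Matrix.diagonal y - C).PosSemidef ∧
          ∀ y' : Fin 3 → ℝ, (Matrix.diagonal y' - C).PosSemidef →
            (∑ i, y i) ≤ (∑ i, y' i)) ∧
        -- strict complementarity
        X * (Matrix.diagonal y - C) = 0 ∧
        (X + (Matrix.diagonal y - C)).PosDef) ↔
      ∃ i, zbar i = 0 := by
  subst hC
  constructor
  · rintro ⟨X, y, ⟨hXpsd, hXdiag, hXopt⟩, ⟨hSpsd, hyopt⟩, hXS, hXpS⟩
    by_contra hne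
    push_neg at hne
    have hx2 : ∀ i, xbar i * xbar i = 1 := fun i => by rcases hx i with h | h <;> rw [h] <;> norm_num
    have hxne : ∀ i, xbar i ≠ 0 := fun i => by rcases hx i with h | h <;> rw [h] <;> norm_num
    simp only [Fin.sum_univ_three] at hz
    -- Step 1 : X *ᵥ zbar = 0
    have hYx : (vecMulVec xbar xbar).PosSemidef := posSemidef_vecMulVec_self _
    have hkey := hXopt _ hYx (fun i => by rw [vecMulVec_apply]; exact hx2 i)
    rw [trace_C_mul, trace_C_mul, dot_vecMulVec_self] at hkey
    have hxz : xbar ⬝ᵥ zbar = 0 := by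
      simp only [dotProduct, Fin.sum_univ_three]; linarith
    rw [hxz] at hkey
    simp only [hXdiag, vecMulVec_apply, mul_one] at hkey
    have hsum : (∑ i, ybar i * (xbar i * xbar i)) = ∑ i, ybar i := by
      exact Finset.sum_congr rfl fun t _ => by rw [hx2 t, mul_one]
    rw [hsum] at hkey
    have hq0 : zbar ⬝ᵥ (X *ᵥ zbar) = 0 := by
      have hge := hXpsd.dotProduct_mulVec_nonneg zbar
      rw [star_trivial] at hge
      nlinarith
    have hXz : X *ᵥ zbar = 0 := by
      have := (hXpsd.dotProduct_mulVec_zero_iff zbar).mp (by rw [star_trivial]; exact hq0)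
      exact this
    -- Step 2 : X = vecMulVec xbar xbar
    have hsym : ∀ i j, X i j = X j i := fun i j => by
      have h := congrFun (congrFun hXpsd.1 j) i
      simpa using h
    have e0 := congrFun hXz 0
    have e1 := congrFun hXz 1
    have e2 := congrFun hXz 2
    simp only [mulVec, dotProduct, Fin.sum_univ_three, Pi.zero_apply] at e0 e1 e2
    rw [hXdiag 0] at e0
    rw [hsym 1 0, hXdiag 1] at e1
    rw [hsym 2 0, hsym 2 1, hXdiag 2] at e2
    have hz0 := hne 0; have hz1 := hne 1; have hz2 := hne 2
    have key01 : 2 * zbar 0 * zbar 1 * X 0 1 = 2 * zbar 0 * zbar 1 * (xbar 0 * xbar 1) := by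
      linear_combination zbar 0 * e0 + zbar 1 * e1 - zbar 2 * e2
        - (xbar 0 * zbar 0 + xbar 1 * zbar 1 - xbar 2 * zbar 2) * hz
        + zbar 0 ^ 2 * hx2 0 + zbar 1 ^ 2 * hx2 1 - zbar 2 ^ 2 * hx2 2
    have key02 : 2 * zbar 0 * zbar 2 * X 0 2 = 2 * zbar 0 * zbar 2 * (xbar 0 * xbar 2) := by
      linear_combination zbar 0 * e0 - zbar 1 * e1 + zbar 2 * e2
        - (xbar 0 * zbar 0 - xbar 1 * zbar 1 + xbar 2 * zbar 2) * hz
        + zbar 0 ^ 2 * hx2 0 - zbar 1 ^ 2 * hx2 1 + zbar 2 ^ 2 * hx2 2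
    have key12 : 2 * zbar 1 * zbar 2 * X 1 2 = 2 * zbar 1 * zbar 2 * (xbar 1 * xbar 2) := by
      linear_combination -(zbar 0 * e0) + zbar 1 * e1 + zbar 2 * e2
        - (-(xbar 0 * zbar 0) + xbar 1 * zbar 1 + xbar 2 * zbar 2) * hz
        - zbar 0 ^ 2 * hx2 0 + zbar 1 ^ 2 * hx2 1 + zbar 2 ^ 2 * hx2 2
    have hab : X 0 1 = xbar 0 * xbar 1 :=
      mul_left_cancel₀ (by positivity) key01
    have hac : X 0 2 = xbar 0 * xbar 2 :=
      mul_left_cancel₀ (by positivity) key02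
    have hbc : X 1 2 = xbar 1 * xbar 2 :=
      mul_left_cancel₀ (by positivity) key12
    have hXeq : X = vecMulVec xbar xbar := by
      ext i j
      fin_cases i <;> fin_cases j <;>
        simp only [vecMulVec_apply] <;>
        first
          | exact (hXdiag 0).trans (hx2 0).symm
          | exact (hXdiag 1).trans (hx2 1).symm
          | exact (hXdiag 2).trans (hx2 2).symm
          | exact hab
          | exact hac
          | exact hbc
          | exact ((hsym 1 0).trans hab).trans (mul_comm _ _)
          | exact ((hsym 2 0).trans hac).trans (mul_comm _ _)
          | exact ((hsym 2 1).trans hbc).trans (mul_comm _ _)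
    -- Step 3 : y = ybar
    subst hXeq
    have g0 := congrFun (congrFun hXS 0) 0
    have g1 := congrFun (congrFun hXS 1) 1
    have g2 := congrFun (congrFun hXS 2) 2
    simp [mul_apply, Matrix.sub_apply, diagonal_apply, vecMulVec_apply,
      Fin.sum_univ_three] at g0 g1 g2
    have hy0 : y 0 = ybar 0 := by
      linear_combination g0 - xbar 0 * zbar 0 * hz - (y 0 - ybar 0) * hx2 0
    have hy1 : y 1 = ybar 1 := by
      linear_combination g1 - xbar 1 * zbar 1 * hz - (y 1 - ybar 1) * hx2 1
    have hy2 : y 2 = ybar 2 := by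
      linear_combination g2 - xbar 2 * zbar 2 * hz - (y 2 - ybar 2) * hx2 2
    have hS : diagonal y - (diagonal ybar - vecMulVec zbar zbar) = vecMulVec zbar zbar := by
      have hyeq : y = ybar := by funext j; fin_cases j; exacts [hy0, hy1, hy2]
      rw [hyeq, sub_sub_cancel]
    rw [hS] at hXpS
    -- Step 4 : contradiction via the cross product vector
    set v : Fin 3 → ℝ := ![xbar 1 * zbar 2 - xbar 2 * zbar 1,
      xbar 2 * zbar 0 - xbar 0 * zbar 2, xbar 0 * zbar 1 - xbar 1 * zbar 0] with hv
    have hvne : v ≠ 0 := by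
      intro h
      have h0 := congrFun h 0
      have h1 := congrFun h 1
      have h2 := congrFun h 2
      simp only [hv, Matrix.cons_val_zero, Matrix.cons_val_one, Matrix.head_cons, Pi.zero_apply,
        Matrix.cons_val_two, Matrix.tail_cons] at h0 h1 h2
      apply hne 0
      linear_combination (xbar 0 * hz - xbar 1 * h2 + xbar 2 * h1
        - zbar 0 * hx2 0 - zbar 0 * hx2 1 - zbar 0 * hx2 2) / 3
    have hpos := hXpS.dotProduct_mulVec_pos hvne
    rw [star_trivial, add_mulVec, dotProduct_add, dot_vecMulVec_self, dot_vecMulVec_self] at hpos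
    have hxv : xbar ⬝ᵥ v = 0 := by
      simp only [dotProduct, Fin.sum_univ_three, hv, Matrix.cons_val_zero, Matrix.cons_val_one,
        Matrix.head_cons, Matrix.cons_val_two, Matrix.tail_cons]
      ring
    have hzv : zbar ⬝ᵥ v = 0 := by
      simp only [dotProduct, Fin.sum_univ_three, hv, Matrix.cons_val_zero, Matrix.cons_val_one,
        Matrix.head_cons, Matrix.cons_val_two, Matrix.tail_cons]
      ring
    rw [hxv, hzv] at hpos
    norm_num at hpos
  · rintro ⟨i, hzi⟩
    have hx2 : ∀ i, xbar i * xbar i = 1 := fun i => by rcases hx i with h | h <;> rw [h] <;> norm_num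
    have hxne : ∀ i, xbar i ≠ 0 := fun i => by rcases hx i with h | h <;> rw [h] <;> norm_num
    by_cases h0 : ∀ t, zbar t = 0
    · -- zbar = 0 : take X = 1, y = ybar
      have hzz : vecMulVec zbar zbar = 0 := by
        ext a b; rw [vecMulVec_apply, h0 a]; simp
      refine ⟨1, ybar, ⟨Matrix.PosSemidef.one, fun i => Matrix.one_apply_eq i, ?_⟩,
        ⟨?_, dual_opt xbar ybar zbar hx2 hz⟩, ?_, ?_⟩
      · intro Y hY hYd
        apply primal_opt ybar zbar 1 (fun i => Matrix.one_apply_eq i) _ Y hY hYd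
        rw [one_mulVec]; funext t; exact h0 t
      · rw [sub_sub_cancel]; exact posSemidef_vecMulVec_self _
      · rw [sub_sub_cancel, hzz, mul_zero]
      · rw [sub_sub_cancel, hzz, add_zero]; exact Matrix.PosDef.one
    · -- some coordinate of zbar is nonzero
      push_neg at h0
      obtain ⟨t0, ht0⟩ := h0
      have hdist : ∀ a b : Fin 3, a ≠ b → (-a - b ≠ a ∧ -a - b ≠ b) := by decide
      have hmem3 : ∀ a b r : Fin 3, a ≠ b → r = a ∨ r = b ∨ r = -a - b := by decide
      -- every coordinate other than i is nonzero
      have hall : ∀ t, t ≠ i → zbar t ≠ 0 := by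
        intro t hti hzt
        have hit : i ≠ t := Ne.symm hti
        obtain ⟨hsi, hst⟩ := hdist i t hit
        have hzs : zbar (-i - t) = 0 := by
          have hsum := sum3 i t (-i - t) hit (Ne.symm hsi) (Ne.symm hst)
            (fun r => zbar r * xbar r)
          rw [hz] at hsum  -- careful direction
          have : zbar (-i - t) * xbar (-i - t) = 0 := by
            rw [hzi, hzt] at hsum; linarith [hsum]
          exact (mul_eq_zero.mp this).resolve_right (hxne _)
        rcases hmem3 i t t0 hit with h | h | h
        · exact ht0 (h ▸ hzi)
        · exact ht0 (h ▸ hzt)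
        · exact ht0 (h ▸ hzs)
      set u : Fin 3 → ℝ := fun t => if t = i then 0 else xbar t with hu
      set e : Fin 3 → ℝ := fun t => if t = i then 1 else 0 with he
      set X : Matrix (Fin 3) (Fin 3) ℝ := vecMulVec u u + vecMulVec e e with hX
      have huz : u ⬝ᵥ zbar = 0 := by
        rw [dotProduct]
        rw [show ∑ t, u t * zbar t = ∑ t, zbar t * xbar t from
          Finset.sum_congr rfl fun t _ => by
            by_cases ht : t = i
            · subst ht; rw [hu]; simp [hzi]
            · rw [hu]; simp [ht]; ring]
        exact hz
      have hez : e ⬝ᵥ zbar = 0 := by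
        rw [dotProduct]
        rw [show ∑ t, e t * zbar t = zbar i by
          rw [he]; simp [ite_mul, Finset.sum_ite_eq']]
        exact hzi
      have hXz : X *ᵥ zbar = 0 := by
        rw [hX, add_mulVec, vecMulVec_mulVec', vecMulVec_mulVec', huz, hez]
        simp
      have hXdiag : ∀ t, X t t = 1 := by
        intro t
        rw [hX]
        by_cases ht : t = i
        · subst ht; simp [vecMulVec_apply, hu, he]
        · simp [vecMulVec_apply, hu, he, ht, hx2 t]
      have hXpsd : X.PosSemidef :=
        (posSemidef_vecMulVec_self u).add (posSemidef_vecMulVec_self e)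
      refine ⟨X, ybar, ⟨hXpsd, hXdiag, primal_opt ybar zbar X hXdiag hXz⟩,
        ⟨?_, dual_opt xbar ybar zbar hx2 hz⟩, ?_, ?_⟩
      · rw [sub_sub_cancel]; exact posSemidef_vecMulVec_self _
      · rw [sub_sub_cancel, mul_vecMulVec', hXz]
        ext a b; simp [vecMulVec_apply]
      · rw [sub_sub_cancel]
        apply PosDef.of_dotProduct_mulVec_pos
        · exact (hXpsd.add (posSemidef_vecMulVec_self zbar)).1
        · intro v hv
          rw [star_trivial, hX, add_mulVec, add_mulVec, dotProduct_add, dotProduct_add,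
            dot_vecMulVec_self, dot_vecMulVec_self, dot_vecMulVec_self]
          rcases lt_or_eq_of_le (by positivity :
              (0:ℝ) ≤ (u ⬝ᵥ v) ^ 2 + (e ⬝ᵥ v) ^ 2 + (zbar ⬝ᵥ v) ^ 2) with hlt | heq
          · exact hlt
          · exfalso
            have huv : u ⬝ᵥ v = 0 := by nlinarith [sq_nonneg (u ⬝ᵥ v), sq_nonneg (e ⬝ᵥ v), sq_nonneg (zbar ⬝ᵥ v)]
            have hev : e ⬝ᵥ v = 0 := by nlinarith [sq_nonneg (u ⬝ᵥ v), sq_nonneg (e ⬝ᵥ v), sq_nonneg (zbar ⬝ᵥ v)]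
            have hzv : zbar ⬝ᵥ v = 0 := by nlinarith [sq_nonneg (u ⬝ᵥ v), sq_nonneg (e ⬝ᵥ v), sq_nonneg (zbar ⬝ᵥ v)]
            have hvi : v i = 0 := by
              rw [dotProduct] at hev
              rw [show ∑ t, e t * v t = v i by rw [he]; simp [ite_mul, Finset.sum_ite_eq']] at hev
              exact hev
            apply hv
            funext t
            by_cases hti : t = i
            · subst hti; exact hvi
            · -- t ≠ i : use the third index s
              have hit : i ≠ t := Ne.symm hti
              obtain ⟨hsi, hst⟩ := hdist i t hit
              set s : Fin 3 := -i - t with hs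
              have hzt : zbar t ≠ 0 := hall t hti
              -- expand the three dot products over {i, t, s}
              have hA : xbar t * v t + xbar s * v s = 0 := by
                rw [dotProduct, sum3 i t s hit (Ne.symm hsi) (Ne.symm hst)] at huv
                rw [show u i = 0 by simp [hu], show u t = xbar t by simp [hu, hti],
                  show u s = xbar s by simp [hu, hsi]] at huv
                linarith [huv]
              have hB : zbar t * v t + zbar s * v s = 0 := by
                rw [dotProduct, sum3 i t s hit (Ne.symm hsi) (Ne.symm hst)] at hzv
                rw [hzi] at hzv
                linarith [hzv]
              have hCq : zbar t * xbar t + zbar s * xbar s = 0 := by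
                have hsum := sum3 i t s hit (Ne.symm hsi) (Ne.symm hst)
                  (fun r => zbar r * xbar r)
                rw [hz, hzi] at hsum
                linarith [hsum]
              have hkey : (2 * zbar t * xbar s) * v t = 0 := by
                linear_combination xbar s * hB - zbar s * hA + (xbar t * xbar s * v t) * hCq
                  - (zbar t * xbar s * v t) * hx2 t - (zbar s * xbar t * v t) * hx2 s
              have h2ne : (2 : ℝ) * zbar t * xbar s ≠ 0 :=
                mul_ne_zero (mul_ne_zero two_ne_zero hzt) (hxne s)
              exact (mul_eq_zero.mp hkey).resolve_left h2ne
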